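/- arXiv:2512.10134 — 4 statements merged into one kernel-verified Lean document; each statement's English description precedes it below -/
import Mathlib

section
/- Let G be a graph with maximum degree at most Δ ≥ 1. For any vertex v of G and any m ≥ 1, the number of connected induced subgraphs of G of order m containing v is at most (mΔ)^{m−1}/m!. -/
open Function

namespace BCKL

variable {n : ℕ} [NeZero n]

/-- `j` eventually reaches `0` under iteration of `π`. -/
def Reaches (π : Fin n → Fin n) (j : Fin n) : Prop := ∃ t, π^[t] j = 0

noncomputable def rk (π : Fin n → Fin n) (j : Fin n) (h : Reaches π j) : ℕ :=
  Nat.find h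

lemma rk_spec (π : Fin n → Fin n) (j : Fin n) (h : Reaches π j) :
    π^[rk π j h] j = 0 := Nat.find_spec h

lemma rk_min (π : Fin n → Fin n) (j : Fin n) (h : Reaches π j) {t : ℕ}
    (ht : t < rk π j h) : π^[t] j ≠ 0 := Nat.find_min h ht

/-- The chain `[j, π j, π² j, …, 0]`. -/
noncomputable def chainL (π : Fin n → Fin n) (j : Fin n) (h : Reaches π j) : List (Fin n) :=
  (List.range (rk π j h + 1)).map (fun t => π^[t] j)

lemma length_chainL (π : Fin n → Fin n) (j : Fin n) (h : Reaches π j) :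
    (chainL π j h).length = rk π j h + 1 := by
  simp [chainL]

lemma getElem_chainL (π : Fin n → Fin n) (j : Fin n) (h : Reaches π j) (t : ℕ)
    (ht : t < (chainL π j h).length) : (chainL π j h)[t] = π^[t] j := by
  have ht' : t < (List.range (rk π j h + 1)).length := by
    simpa [chainL] using ht
  simp only [chainL, List.getElem_map, List.getElem_range]

lemma chainL_getD (π : Fin n → Fin n) (j : Fin n) (h : Reaches π j) {t : ℕ}
    (ht : t ≤ rk π j h) : (chainL π j h).getD t 0 = π^[t] j := by
  rw [List.getD_eq_getElem _ _ (by rw [length_chainL]; omega), getElem_chainL]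

lemma mem_chainL {π : Fin n → Fin n} {j : Fin n} (h : Reaches π j) {i : Fin n} :
    i ∈ chainL π j h ↔ ∃ t ≤ rk π j h, π^[t] j = i := by
  simp only [chainL, List.mem_map, List.mem_range]
  constructor
  · rintro ⟨t, ht, rfl⟩; exact ⟨t, by omega, rfl⟩
  · rintro ⟨t, ht, rfl⟩; exact ⟨t, by omega, rfl⟩

lemma zero_mem_chainL (π : Fin n → Fin n) (j : Fin n) (h : Reaches π j) :
    (0 : Fin n) ∈ chainL π j h :=
  (mem_chainL h).2 ⟨rk π j h, le_rfl, rk_spec π j h⟩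

lemma nodup_chainL (π : Fin n → Fin n) (j : Fin n) (h : Reaches π j) :
    (chainL π j h).Nodup := by
  refine List.Nodup.map_on ?_ List.nodup_range
  intro a ha b hb hab
  simp only [List.mem_range] at ha hb
  by_contra hne
  have main : ∀ a b : ℕ, a < rk π j h + 1 → b < rk π j h + 1 → π^[a] j = π^[b] j →
      a < b → False := by
    clear hab ha hb hne
    intro a b ha hb hab hlt
    have key : ∀ s, π^[a + s] j = π^[b + s] j := by
      intro s
      rw [Nat.add_comm a s, Nat.add_comm b s, Function.iterate_add_apply,
        Function.iterate_add_apply, hab]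
    have h1 : π^[a + (rk π j h - b)] j = 0 := by
      rw [key]
      have : b + (rk π j h - b) = rk π j h := by omega
      rw [this, rk_spec]
    exact rk_min π j h (by omega) h1
  rcases Nat.lt_or_ge a b with hlt | hge
  · exact main a b ha hb hab hlt
  · exact main b a hb ha hab.symm (by omega)

lemma iterate_eq_zero_of_le {π : Fin n → Fin n} (hπ0 : π 0 = 0) {i : Fin n} {T : ℕ}
    (hT : π^[T] i = 0) {t : ℕ} (ht : T ≤ t) : π^[t] i = 0 := by
  obtain ⟨d, rfl⟩ := Nat.exists_eq_add_of_le ht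
  clear ht
  induction d with
  | zero => simpa using hT
  | succ d ih =>
    have : T + (d + 1) = (T + d) + 1 := by omega
    rw [this, Function.iterate_succ_apply', ih, hπ0]

/-- The sorted listing of the chain's elements. -/
noncomputable def sortedL (π : Fin n → Fin n) (j : Fin n) (h : Reaches π j) : List (Fin n) :=
  ((chainL π j h).toFinset).sort (· ≤ ·)

noncomputable def tailL (π : Fin n → Fin n) (j : Fin n) (h : Reaches π j) : List (Fin n) :=
  (sortedL π j h).tail

lemma length_sortedL (π : Fin n → Fin n) (j : Fin n) (h : Reaches π j) :
    (sortedL π j h).length = rk π j h + 1 := by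
  rw [sortedL, Finset.length_sort, List.toFinset_card_of_nodup (nodup_chainL π j h),
    length_chainL]

lemma mem_sortedL (π : Fin n → Fin n) (j : Fin n) (h : Reaches π j) {i : Fin n} :
    i ∈ sortedL π j h ↔ i ∈ chainL π j h := by
  rw [sortedL, Finset.mem_sort, List.mem_toFinset]

lemma nodup_sortedL (π : Fin n → Fin n) (j : Fin n) (h : Reaches π j) :
    (sortedL π j h).Nodup := Finset.sort_nodup _ _

lemma sortedL_eq (π : Fin n → Fin n) (j : Fin n) (h : Reaches π j) :
    sortedL π j h = 0 :: tailL π j h := by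
  have hlen : 0 < (sortedL π j h).length := by rw [length_sortedL]; omega
  have hne : sortedL π j h ≠ [] := List.ne_nil_of_length_pos hlen
  have hmem : (0 : Fin n) ∈ sortedL π j h :=
    (mem_sortedL π j h).2 (zero_mem_chainL π j h)
  have hhead : (sortedL π j h).head hne = 0 := by
    have h1 : (sortedL π j h).head hne = (sortedL π j h).get ⟨0, hlen⟩ := by
      rw [List.head_eq_getElem]
      rfl
    obtain ⟨k, hk⟩ := List.mem_iff_get.1 hmem
    refine le_antisymm ?_ (Fin.zero_le _)
    rw [h1, ← hk]
    rcases Nat.eq_zero_or_pos (k : ℕ) with hk0 | hk0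
    · have : (⟨0, hlen⟩ : Fin (sortedL π j h).length) = k := Fin.ext (by simp [hk0])
      rw [this]
    · have hs : (sortedL π j h).Pairwise (· ≤ ·) := Finset.pairwise_sort _ _
      refine hs.rel_get_of_lt ?_
      rw [Fin.lt_def]
      simpa using hk0
  conv_lhs => rw [← List.cons_head_tail hne, hhead]
  rfl

lemma length_tailL (π : Fin n → Fin n) (j : Fin n) (h : Reaches π j) :
    (tailL π j h).length = rk π j h := by
  have := length_sortedL π j h
  rw [sortedL_eq] at this
  simpa using this

lemma nodup_tailL (π : Fin n → Fin n) (j : Fin n) (h : Reaches π j) :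
    (tailL π j h).Nodup := by
  have := nodup_sortedL π j h
  rw [sortedL_eq] at this
  exact this.of_cons

lemma zero_not_mem_tailL (π : Fin n → Fin n) (j : Fin n) (h : Reaches π j) :
    (0 : Fin n) ∉ tailL π j h := by
  have := nodup_sortedL π j h
  rw [sortedL_eq, List.nodup_cons] at this
  exact this.1

lemma mem_tailL (π : Fin n → Fin n) (j : Fin n) (h : Reaches π j) {i : Fin n} :
    i ∈ tailL π j h ↔ i ∈ chainL π j h ∧ i ≠ 0 := by
  constructor
  · intro hi
    refine ⟨(mem_sortedL π j h).1 ?_, ?_⟩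
    · rw [sortedL_eq]; exact List.mem_cons_of_mem _ hi
    · rintro rfl; exact zero_not_mem_tailL π j h hi
  · rintro ⟨hi, hne⟩
    have : i ∈ sortedL π j h := (mem_sortedL π j h).2 hi
    rw [sortedL_eq, List.mem_cons] at this
    tauto

/-- The Joyal-style encoding of the pair `(π, j)` as a single function fixing `0`. -/
noncomputable def joyal (π : Fin n → Fin n) (j : Fin n) (h : Reaches π j) : Fin n → Fin n :=
  fun i => if i ∈ tailL π j h then (chainL π j h).getD ((tailL π j h).idxOf i) 0 else π i

lemma joyal_of_not_mem_tail (π : Fin n → Fin n) (j : Fin n) (h : Reaches π j) {i : Fin n}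
    (hi : i ∉ tailL π j h) : joyal π j h i = π i := if_neg hi

lemma joyal_zero {π : Fin n → Fin n} (hπ0 : π 0 = 0) (j : Fin n) (h : Reaches π j) :
    joyal π j h 0 = 0 := by
  rw [joyal_of_not_mem_tail π j h (zero_not_mem_tailL π j h), hπ0]

lemma indexOf_tailL_lt (π : Fin n → Fin n) (j : Fin n) (h : Reaches π j) {i : Fin n}
    (hi : i ∈ tailL π j h) :
    (tailL π j h).idxOf i < rk π j h := by
  have := List.idxOf_lt_length_iff.2 hi
  rwa [length_tailL] at this

lemma joyal_of_mem_tail (π : Fin n → Fin n) (j : Fin n) (h : Reaches π j) {i : Fin n}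
    (hi : i ∈ tailL π j h) :
    joyal π j h i = (chainL π j h)[(tailL π j h).idxOf i]'
      (by rw [length_chainL]; exact Nat.lt_succ_of_lt (indexOf_tailL_lt π j h hi)) := by
  rw [joyal, if_pos hi, List.getD_eq_getElem]

lemma joyal_mem_chain {π : Fin n → Fin n} (hπ0 : π 0 = 0) (j : Fin n) (h : Reaches π j)
    {i : Fin n} (hi : i ∈ chainL π j h) : joyal π j h i ∈ chainL π j h := by
  by_cases ht : i ∈ tailL π j h
  · rw [joyal_of_mem_tail π j h ht]
    exact List.getElem_mem _
  · rw [joyal_of_not_mem_tail π j h ht]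
    have : i = 0 := by
      by_contra hne
      exact ht ((mem_tailL π j h).2 ⟨hi, hne⟩)
    rw [this, hπ0]
    exact zero_mem_chainL π j h

lemma joyal_injOn_chain {π : Fin n → Fin n} (hπ0 : π 0 = 0) (j : Fin n) (h : Reaches π j)
    {i i' : Fin n} (hi : i ∈ chainL π j h) (hi' : i' ∈ chainL π j h)
    (heq : joyal π j h i = joyal π j h i') : i = i' := by
  have key : ∀ x : Fin n, x ∈ chainL π j h → x ∉ tailL π j h → x = 0 := by
    intro x hx hxt
    by_contra hne
    exact hxt ((mem_tailL π j h).2 ⟨hx, hne⟩)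
  have hzero : ∀ x : Fin n, (hx : x ∈ tailL π j h) → joyal π j h x ≠ 0 := by
    intro x hx hx0
    rw [joyal_of_mem_tail π j h hx] at hx0
    have hrk : π^[rk π j h] j = 0 := rk_spec π j h
    have hlast : (chainL π j h)[rk π j h]'(by rw [length_chainL]; omega) = 0 := by
      rw [getElem_chainL]; exact hrk
    have hidx := indexOf_tailL_lt π j h hx
    have := (nodup_chainL π j h).getElem_inj_iff.1 (hx0.trans hlast.symm)
    omega
  by_cases c : i ∈ tailL π j h <;> by_cases c' : i' ∈ tailL π j h
  · rw [joyal_of_mem_tail π j h c, joyal_of_mem_tail π j h c'] at heq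
    have hidx := (nodup_chainL π j h).getElem_inj_iff.1 heq
    have e1 : (tailL π j h)[(tailL π j h).idxOf i]'
        (List.idxOf_lt_length_iff.2 c) = i := List.getElem_idxOf _
    have e2 : (tailL π j h)[(tailL π j h).idxOf i']'
        (List.idxOf_lt_length_iff.2 c') = i' := List.getElem_idxOf _
    rw [← e1, ← e2]
    congr 1
  · exfalso
    have : i' = 0 := key i' hi' c'
    subst this
    rw [joyal_zero hπ0 j h] at heq
    exact hzero i c heq
  · exfalso
    have : i = 0 := key i hi c
    subst this
    rw [joyal_zero hπ0 j h] at heq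
    exact hzero i' c' heq.symm
  · rw [key i hi c, key i' hi' c']

lemma joyal_iterate_mem_chain {π : Fin n → Fin n} (hπ0 : π 0 = 0) (j : Fin n)
    (h : Reaches π j) {i : Fin n} (hi : i ∈ chainL π j h) (t : ℕ) :
    (joyal π j h)^[t] i ∈ chainL π j h := by
  induction t with
  | zero => simpa using hi
  | succ t ih => rw [Function.iterate_succ_apply']; exact joyal_mem_chain hπ0 j h ih

lemma joyal_periodic {π : Fin n → Fin n} (hπ0 : π 0 = 0) (j : Fin n) (h : Reaches π j)
    {i : Fin n} (hi : i ∈ chainL π j h) :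
    ∃ s, 0 < s ∧ (joyal π j h)^[s] i = i := by
  set p := joyal π j h with hp
  have closure := joyal_iterate_mem_chain hπ0 j h hi
  obtain ⟨a, b, hne, hab⟩ := Finite.exists_ne_map_eq_of_infinite
    (fun t : ℕ => (⟨p^[t] i, closure t⟩ : {x // x ∈ chainL π j h}))
  have hab' : p^[a] i = p^[b] i := by simpa using hab
  have canc : ∀ a d : ℕ, p^[a] i = p^[a + d] i → p^[d] i = i := by
    intro a
    induction a with
    | zero => intro d hd; simpa using hd.symm
    | succ a ih =>
      intro d hd
      have e1 : p^[a + 1] i = p (p^[a] i) := Function.iterate_succ_apply' p a i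
      have e2 : p^[a + 1 + d] i = p (p^[a + d] i) := by
        have : a + 1 + d = (a + d) + 1 := by omega
        rw [this, Function.iterate_succ_apply']
      rw [e1, e2] at hd
      exact ih d (joyal_injOn_chain hπ0 j h (closure a) (closure (a + d)) hd)
  rcases Nat.lt_or_ge a b with hlt | hge
  · obtain ⟨d, rfl⟩ : ∃ d, b = a + d := ⟨b - a, by omega⟩
    exact ⟨d, by omega, canc a d hab'⟩
  · have hlt : b < a := by omega
    obtain ⟨d, rfl⟩ : ∃ d, a = b + d := ⟨a - b, by omega⟩
    exact ⟨d, by omega, canc b d hab'.symm⟩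

lemma joyal_not_periodic {π : Fin n → Fin n} (hπ0 : π 0 = 0) (j : Fin n)
    (h : Reaches π j) (hR : ∀ i, Reaches π i) {i : Fin n} (hi : i ∉ chainL π j h) :
    ¬ ∃ s, 0 < s ∧ (joyal π j h)^[s] i = i := by
  set p := joyal π j h with hp
  obtain ⟨T, hT⟩ := hR i
  have hex : ∃ t, π^[t] i ∈ chainL π j h := ⟨T, by rw [hT]; exact zero_mem_chainL π j h⟩
  set t0 := Nat.find hex with ht0def
  have ht0 : π^[t0] i ∈ chainL π j h := Nat.find_spec hex
  have ht0pos : 0 < t0 := by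
    rcases Nat.eq_zero_or_pos t0 with h0 | h0
    · exfalso; apply hi; rw [h0] at ht0; simpa using ht0
    · exact h0
  have agree : ∀ s, s ≤ t0 → p^[s] i = π^[s] i := by
    intro s
    induction s with
    | zero => simp
    | succ s ih =>
      intro hs
      have hs' : s < t0 := by omega
      have hnc : π^[s] i ∉ chainL π j h := Nat.find_min hex hs'
      have hnt : π^[s] i ∉ tailL π j h := fun hc => hnc ((mem_tailL π j h).1 hc).1
      rw [Function.iterate_succ_apply', ih (by omega), hp,
        joyal_of_not_mem_tail π j h hnt]
      exact (Function.iterate_succ_apply' π s i).symm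
  have inchain : ∀ d, p^[t0 + d] i ∈ chainL π j h := by
    intro d
    induction d with
    | zero => rw [Nat.add_zero, agree t0 le_rfl]; exact ht0
    | succ d ih =>
      have : t0 + (d + 1) = (t0 + d) + 1 := by omega
      rw [this, Function.iterate_succ_apply']
      exact joyal_mem_chain hπ0 j h ih
  rintro ⟨s, hs, hfix⟩
  have mult : ∀ k : ℕ, p^[k * s] i = i := by
    intro k
    induction k with
    | zero => simp
    | succ k ih =>
      have : (k + 1) * s = k * s + s := by ring
      rw [this, Function.iterate_add_apply, hfix, ih]
  have hks : (t0 + 1) * s = t0 + ((t0 + 1) * s - t0) := by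
    have hbig : t0 + 1 ≤ (t0 + 1) * s := Nat.le_mul_of_pos_right _ hs
    omega
  apply hi
  have := inchain ((t0 + 1) * s - t0)
  rw [← hks, mult] at this
  exact this

lemma chainL_eq_decode {π : Fin n → Fin n} (hπ0 : π 0 = 0) (j : Fin n) (h : Reaches π j) :
    chainL π j h = (tailL π j h).map (joyal π j h) ++ [0] := by
  apply List.ext_getElem
  · rw [length_chainL, List.length_append, List.length_map, length_tailL]
    simp
  · intro idx h1 h2
    rw [length_chainL] at h1
    rcases Nat.lt_or_ge idx (rk π j h) with hidx | hidx
    · have hidx2 : idx < ((tailL π j h).map (joyal π j h)).length := by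
        rw [List.length_map, length_tailL]; exact hidx
      rw [List.getElem_append_left hidx2, List.getElem_map]
      have hmem : (tailL π j h)[idx]'(by rw [length_tailL]; exact hidx) ∈ tailL π j h :=
        List.getElem_mem _
      rw [joyal_of_mem_tail π j h hmem]
      have hio : (tailL π j h).idxOf ((tailL π j h)[idx]'(by rw [length_tailL]; exact hidx))
          = idx := by
        have := List.get_idxOf (nodup_tailL π j h)
          ⟨idx, by rw [length_tailL]; exact hidx⟩
        simpa using this
      simp_rw [hio]
    · have hidx' : idx = rk π j h := by omega
      subst hidx'
      have hL : ((tailL π j h).map (joyal π j h)).length = rk π j h := by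
        rw [List.length_map, length_tailL]
      have lhs : (chainL π j h)[rk π j h]'(by rw [length_chainL]; omega) = 0 := by
        rw [getElem_chainL, rk_spec]
      rw [lhs, List.getElem_append_right (by rw [hL])]
      simp

theorem joyal_inj {π π' : Fin n → Fin n} {j j' : Fin n} (hπ0 : π 0 = 0) (hπ0' : π' 0 = 0)
    (hR : ∀ i, Reaches π i) (hR' : ∀ i, Reaches π' i)
    (heq : joyal π j (hR j) = joyal π' j' (hR' j')) : π = π' ∧ j = j' := by
  have hmem : ∀ i, i ∈ chainL π j (hR j) ↔ i ∈ chainL π' j' (hR' j') := by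
    intro i
    constructor <;> intro hi
    · by_contra hni
      exact joyal_not_periodic hπ0' j' (hR' j') hR' hni
        (heq ▸ joyal_periodic hπ0 j (hR j) hi)
    · by_contra hni
      exact joyal_not_periodic hπ0 j (hR j) hR hni
        (heq.symm ▸ joyal_periodic hπ0' j' (hR' j') hi)
  have hfin : (chainL π j (hR j)).toFinset = (chainL π' j' (hR' j')).toFinset := by
    apply Finset.ext
    intro i
    simp only [List.mem_toFinset]
    exact hmem i
  have htail : tailL π j (hR j) = tailL π' j' (hR' j') := by
    rw [tailL, tailL, sortedL, sortedL, hfin]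
  have hchain : chainL π j (hR j) = chainL π' j' (hR' j') := by
    rw [chainL_eq_decode hπ0 j (hR j), chainL_eq_decode hπ0' j' (hR' j'), htail, heq]
  have hrk : rk π j (hR j) = rk π' j' (hR' j') := by
    have := congrArg List.length hchain
    rw [length_chainL, length_chainL] at this
    omega
  have hj : j = j' := by
    have e1 : (chainL π j (hR j))[0]'(by rw [length_chainL]; omega) = j := by
      rw [getElem_chainL]; simp
    have e2 : (chainL π' j' (hR' j'))[0]'(by rw [length_chainL]; omega) = j' := by
      rw [getElem_chainL]; simp
    have h3 := List.getElem_of_eq hchain (show 0 < (chainL π j (hR j)).length by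
      rw [length_chainL]; omega)
    rw [e1, e2] at h3
    exact h3
  refine ⟨funext fun i => ?_, hj⟩
  by_cases hi : i ∈ chainL π j (hR j)
  · obtain ⟨t, ht, hti⟩ := (mem_chainL (hR j)).1 hi
    rcases Nat.eq_or_lt_of_le ht with hrkt | hrkt
    · have hi0 : i = 0 := by rw [← hti, hrkt]; exact rk_spec π j (hR j)
      rw [hi0, hπ0, hπ0']
    · have hti' : π'^[t] j' = i := by
        have e := chainL_getD π' j' (hR' j') (t := t) (by rw [← hrk]; omega)
        rw [← e, ← hchain, chainL_getD π j (hR j) (by omega), hti]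
      have e3 : π^[t + 1] j = π'^[t + 1] j' := by
        rw [← chainL_getD π j (hR j) (t := t + 1) (by omega), hchain,
          chainL_getD π' j' (hR' j') (t := t + 1) (by rw [← hrk]; omega)]
      rw [Function.iterate_succ_apply', Function.iterate_succ_apply', hti, hti'] at e3
      exact e3
  · have hnt : i ∉ tailL π j (hR j) := fun hc => hi ((mem_tailL π j (hR j)).1 hc).1
    have hnt' : i ∉ tailL π' j' (hR' j') := htail ▸ hnt
    rw [← joyal_of_not_mem_tail π j (hR j) hnt, ← joyal_of_not_mem_tail π' j' (hR' j') hnt',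
      heq]

section Graph

variable {V : Type*} [Fintype V] (G : SimpleGraph V) (m : ℕ) [NeZero m] (v : V)

/-- The set of injective enumerations of connected induced subgraphs, starting at `v`. -/
def FS : Set (Fin m → V) :=
  {f | Function.Injective f ∧ f 0 = v ∧ (G.induce (Set.range f)).Connected}

lemma exists_parent {f : Fin m → V} (hf : f ∈ FS G m v) {i : Fin m} (hi : i ≠ 0) :
    ∃ i' : Fin m, G.Adj (f i') (f i) ∧
      (G.induce (Set.range f)).dist ⟨f i', Set.mem_range_self i'⟩ ⟨v, ⟨0, hf.2.1⟩⟩ <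
      (G.induce (Set.range f)).dist ⟨f i, Set.mem_range_self i⟩ ⟨v, ⟨0, hf.2.1⟩⟩ := by
  obtain ⟨hinj, hv, hconn⟩ := hf
  set H := G.induce (Set.range f) with hH
  set u : ↥(Set.range f) := ⟨f i, Set.mem_range_self i⟩ with hu
  set w : ↥(Set.range f) := ⟨v, ⟨0, hv⟩⟩ with hw
  have hne : u ≠ w := by
    simp only [hu, hw, ne_eq, Subtype.mk.injEq]
    intro hfi
    exact hi (hinj ((congrArg Subtype.val hfi).trans hv.symm))
  have hreach : H.Reachable u w := hconn.preconnected u w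
  have hd : 0 < H.dist u w := hreach.pos_dist_of_ne hne
  obtain ⟨p, hp⟩ := hreach.exists_walk_length_eq_dist
  obtain ⟨b, ha, q, rfl⟩ := p.exists_eq_cons_of_ne hne
  · obtain ⟨i', hi'⟩ := b.2
    refine ⟨i', ?_, ?_⟩
    · have : G.Adj (u : V) (b : V) := ha
      rw [hi']
      exact this.symm
    · have hble : H.dist b w ≤ q.length := SimpleGraph.dist_le q
      have hlen : q.length + 1 = H.dist u w := by simpa using hp
      have hbeq : (⟨f i', Set.mem_range_self i'⟩ : ↥(Set.range f)) = b := Subtype.ext hi'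
      rw [hbeq]
      have hgoal : H.dist b w < H.dist u w := by omega
      exact hgoal

open Classical in
/-- A canonical parent map: each nonzero index is mapped to an index whose image
is adjacent and closer to `v`. -/
noncomputable def par (f : Fin m → V) : Fin m → Fin m := fun i =>
  if h : f ∈ FS G m v ∧ i ≠ 0 then (exists_parent G m v h.1 h.2).choose else 0

lemma par_zero (f : Fin m → V) : par G m v f 0 = 0 := by
  rw [par, dif_neg]
  simp

lemma par_adj {f : Fin m → V} (hf : f ∈ FS G m v) {i : Fin m} (hi : i ≠ 0) :
    G.Adj (f (par G m v f i)) (f i) := by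
  rw [par, dif_pos ⟨hf, hi⟩]
  exact (exists_parent G m v hf hi).choose_spec.1

lemma par_dist {f : Fin m → V} (hf : f ∈ FS G m v) {i : Fin m} (hi : i ≠ 0) :
    (G.induce (Set.range f)).dist ⟨f (par G m v f i), Set.mem_range_self _⟩ ⟨v, ⟨0, hf.2.1⟩⟩ <
    (G.induce (Set.range f)).dist ⟨f i, Set.mem_range_self i⟩ ⟨v, ⟨0, hf.2.1⟩⟩ := by
  have h1 : par G m v f i = (exists_parent G m v hf hi).choose := by
    rw [par, dif_pos ⟨hf, hi⟩]
  rw [h1]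
  exact (exists_parent G m v hf hi).choose_spec.2

lemma par_reaches {f : Fin m → V} (hf : f ∈ FS G m v) :
    ∀ i, Reaches (par G m v f) i := by
  intro i
  have key : ∀ d : ℕ, ∀ i : Fin m,
      (G.induce (Set.range f)).dist ⟨f i, Set.mem_range_self i⟩ ⟨v, ⟨0, hf.2.1⟩⟩ ≤ d →
      ∃ t, (par G m v f)^[t] i = 0 := by
    intro d
    induction d with
    | zero =>
      intro i hi
      by_cases h0 : i = 0
      · exact ⟨0, h0⟩
      · exfalso
        have := par_dist G m v hf h0
        omega
    | succ d ih =>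
      intro i hi
      by_cases h0 : i = 0
      · exact ⟨0, h0⟩
      · have hlt := par_dist G m v hf h0
        obtain ⟨t, ht⟩ := ih (par G m v f i) (by omega)
        exact ⟨t + 1, by rw [Function.iterate_succ_apply]; exact ht⟩
  exact key _ i le_rfl

/-- Neighbour labels. -/
noncomputable def klab (emb : V → V → Fin Δ') (f : Fin m → V) : Fin m → Fin Δ' :=
  fun i => emb (f (par G m v f i)) (f i)

lemma f_reconstruct {Δ' : ℕ} (emb : V → V → Fin Δ')
    (hemb : ∀ u : V, Set.InjOn (emb u) (G.neighborSet u))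
    {f f' : Fin m → V} (hf : f ∈ FS G m v) (hf' : f' ∈ FS G m v)
    (hpar : par G m v f = par G m v f')
    (hk : ∀ i : Fin m, i ≠ 0 → klab G m v emb f i = klab G m v emb f' i) : f = f' := by
  have key : ∀ T : ℕ, ∀ i : Fin m, (par G m v f)^[T] i = 0 → f i = f' i := by
    intro T
    induction T with
    | zero =>
      intro i hT
      simp only [Function.iterate_zero, id] at hT
      rw [hT, hf.2.1, hf'.2.1]
    | succ T ih =>
      intro i hT
      by_cases h0 : i = 0
      · rw [h0, hf.2.1, hf'.2.1]
      · have hu : (par G m v f)^[T] (par G m v f i) = 0 := by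
          rw [← Function.iterate_succ_apply]; exact hT
        have hfu : f (par G m v f i) = f' (par G m v f i) := ih _ hu
        have adj1 : G.Adj (f (par G m v f i)) (f i) := par_adj G m v hf h0
        have adj2 : G.Adj (f' (par G m v f' i)) (f' i) := par_adj G m v hf' h0
        rw [← hpar, ← hfu] at adj2
        have hkk := hk i h0
        rw [klab, klab, ← hpar, ← hfu] at hkk
        exact hemb (f (par G m v f i)) adj1 adj2 hkk
  funext i
  obtain ⟨T, hT⟩ := par_reaches G m v hf i
  exact key T i hT

open Classical in
/-- Enumerations of a connected set. -/
noncomputable def enum (S : Finset V) (hcard : S.card = m) (hv : v ∈ S)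
    (σ : Equiv.Perm {i : Fin m // i ≠ 0}) : Fin m → V :=
  fun i => ((S.equivFinOfCardEq hcard).symm
    (Equiv.swap 0 ((S.equivFinOfCardEq hcard) ⟨v, hv⟩) ((Equiv.Perm.ofSubtype σ) i)) : V)

lemma enum_injective (S : Finset V) (hcard : S.card = m) (hv : v ∈ S)
    (σ : Equiv.Perm {i : Fin m // i ≠ 0}) : Function.Injective (enum m v S hcard hv σ) := by
  intro a b hab
  have h1 := Subtype.coe_injective hab
  have h2 := (S.equivFinOfCardEq hcard).symm.injective h1
  have h3 := (Equiv.swap 0 ((S.equivFinOfCardEq hcard) ⟨v, hv⟩)).injective h2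
  exact (Equiv.Perm.ofSubtype σ).injective h3

lemma enum_zero (S : Finset V) (hcard : S.card = m) (hv : v ∈ S)
    (σ : Equiv.Perm {i : Fin m // i ≠ 0}) : enum m v S hcard hv σ 0 = v := by
  classical
  have h0 : (Equiv.Perm.ofSubtype σ) (0 : Fin m) = 0 :=
    Equiv.Perm.ofSubtype_apply_of_not_mem σ (by simp)
  rw [enum]
  beta_reduce
  rw [h0, Equiv.swap_apply_left, Equiv.symm_apply_apply]

lemma enum_range (S : Finset V) (hcard : S.card = m) (hv : v ∈ S)
    (σ : Equiv.Perm {i : Fin m // i ≠ 0}) : Set.range (enum m v S hcard hv σ) = ↑S := by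
  ext x
  constructor
  · rintro ⟨i, rfl⟩
    exact Subtype.coe_prop _
  · intro hx
    refine ⟨(Equiv.Perm.ofSubtype σ).symm
      ((Equiv.swap 0 ((S.equivFinOfCardEq hcard) ⟨v, hv⟩)).symm
        ((S.equivFinOfCardEq hcard) ⟨x, hx⟩)), ?_⟩
    rw [enum]
    beta_reduce
    rw [Equiv.apply_symm_apply, Equiv.apply_symm_apply, Equiv.symm_apply_apply]

lemma step1 (hm : 1 ≤ m) :
    {S : Finset V | v ∈ S ∧ S.card = m ∧ (G.induce (↑S : Set V)).Connected}.ncard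
      * (m - 1).factorial ≤ Nat.card ↥(FS G m v) := by
  classical
  set A := {S : Finset V | v ∈ S ∧ S.card = m ∧ (G.induce (↑S : Set V)).Connected} with hA
  have key : ∀ (x : ↥A) (σ : Equiv.Perm {i : Fin m // i ≠ 0}),
      enum m v x.1 x.2.2.1 x.2.1 σ ∈ FS G m v := by
    rintro ⟨S, hS⟩ σ
    refine ⟨enum_injective m v S hS.2.1 hS.1 σ, enum_zero m v S hS.2.1 hS.1 σ, ?_⟩
    rw [enum_range m v S hS.2.1 hS.1 σ]
    exact hS.2.2
  set ι : ↥A × Equiv.Perm {i : Fin m // i ≠ 0} → ↥(FS G m v) :=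
    fun x => ⟨enum m v x.1.1 x.1.2.2.1 x.1.2.1 x.2, key x.1 x.2⟩ with hι
  have hinj : Function.Injective ι := by
    rintro ⟨⟨S, hS⟩, σ⟩ ⟨⟨S', hS'⟩, σ'⟩ h
    have hval : enum m v S hS.2.1 hS.1 σ = enum m v S' hS'.2.1 hS'.1 σ' :=
      congrArg Subtype.val h
    have hSS : S = S' := by
      apply Finset.coe_injective
      rw [← enum_range m v S hS.2.1 hS.1 σ, ← enum_range m v S' hS'.2.1 hS'.1 σ', hval]
    subst hSS
    have hσ : σ = σ' := by
      apply Equiv.ext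
      rintro ⟨i, hi⟩
      have h1 := congrFun hval i
      rw [enum, enum] at h1
      beta_reduce at h1
      have h2 := Subtype.coe_injective h1
      have h3 := (S.equivFinOfCardEq hS.2.1).symm.injective h2
      have h4 := (Equiv.swap 0 ((S.equivFinOfCardEq hS.2.1) ⟨v, hS.1⟩)).injective h3
      rw [Equiv.Perm.ofSubtype_apply_of_mem σ hi, Equiv.Perm.ofSubtype_apply_of_mem σ' hi]
        at h4
      exact Subtype.ext (Subtype.coe_injective h4 ▸ rfl)
    subst hσ
    rfl
  have hcard := Nat.card_le_card_of_injective ι hinj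
  rw [Nat.card_prod] at hcard
  have hP : Nat.card (Equiv.Perm {i : Fin m // i ≠ 0}) = (m - 1).factorial := by
    rw [Nat.card_eq_fintype_card, Fintype.card_perm]
    congr 1
    have : Fintype.card {i : Fin m // i ≠ 0} = Fintype.card (Fin m) - 1 := by
      rw [Fintype.card_subtype_compl (fun i : Fin m => i = 0)]
      simp
    simp [this]
  rw [hP, Nat.card_coe_set_eq] at hcard
  exact hcard

lemma step2 {Δ : ℕ} (hΔ : 1 ≤ Δ) (hdeg : ∀ u, (G.neighborSet u).ncard ≤ Δ) :
    Nat.card ↥(FS G m v) * m ≤ m ^ (m - 1) * Δ ^ (m - 1) := by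
  classical
  have hemb : ∀ u : V, ∃ g : V → Fin Δ, Set.InjOn g (G.neighborSet u) := by
    intro u
    have hcard : Fintype.card ↥(G.neighborSet u) ≤ Fintype.card (Fin Δ) := by
      rw [Fintype.card_fin, ← Nat.card_eq_fintype_card, Nat.card_coe_set_eq]
      exact hdeg u
    obtain ⟨e⟩ := Function.Embedding.nonempty_iff_card_le.2 hcard
    refine ⟨fun x => if h : x ∈ G.neighborSet u then e ⟨x, h⟩ else ⟨0, hΔ⟩, ?_⟩
    intro x hx y hy hxy
    have hxy' : (if h : x ∈ G.neighborSet u then e ⟨x, h⟩ else ⟨0, hΔ⟩)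
        = (if h : y ∈ G.neighborSet u then e ⟨y, h⟩ else ⟨0, hΔ⟩) := hxy
    rw [dif_pos hx, dif_pos hy] at hxy'
    exact congrArg Subtype.val (e.injective hxy')
  choose emb hembInj using hemb
  set Φ : ↥(FS G m v) × Fin m →
      ({i : Fin m // i ≠ 0} → Fin m) × ({i : Fin m // i ≠ 0} → Fin Δ) :=
    fun x => (fun i => joyal (par G m v x.1.1) x.2 (par_reaches G m v x.1.2 x.2) i.1,
              fun i => klab G m v emb x.1.1 i.1) with hΦ
  have hinj : Function.Injective Φ := by
    rintro ⟨⟨f, hf⟩, j⟩ ⟨⟨f', hf'⟩, j'⟩ h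
    rw [Prod.ext_iff] at h
    obtain ⟨h1, h2⟩ := h
    simp only [hΦ] at h1 h2
    have hz1 : par G m v f 0 = 0 := par_zero G m v f
    have hz2 : par G m v f' 0 = 0 := par_zero G m v f'
    have hjoy : joyal (par G m v f) j (par_reaches G m v hf j)
        = joyal (par G m v f') j' (par_reaches G m v hf' j') := by
      funext i
      by_cases hi : i = 0
      · subst hi
        rw [joyal_zero hz1, joyal_zero hz2]
      · exact congrFun h1 ⟨i, hi⟩
    obtain ⟨hpar, hjj⟩ := joyal_inj hz1 hz2 (par_reaches G m v hf) (par_reaches G m v hf')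
      hjoy
    have hff : f = f' := f_reconstruct G m v emb hembInj hf hf' hpar
      (fun i hi => congrFun h2 ⟨i, hi⟩)
    subst hff
    subst hjj
    rfl
  have hcard := Nat.card_le_card_of_injective Φ hinj
  rw [Nat.card_prod, Nat.card_prod, Nat.card_eq_fintype_card (α := Fin m),
    Fintype.card_fin] at hcard
  have hsub : Fintype.card {i : Fin m // i ≠ 0} = m - 1 := by
    have : Fintype.card {i : Fin m // i ≠ 0} = Fintype.card (Fin m) - 1 := by
      rw [Fintype.card_subtype_compl (fun i : Fin m => i = 0)]
      simp
    simp [this]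
  have hc1 : Nat.card ({i : Fin m // i ≠ 0} → Fin m) = m ^ (m - 1) := by
    rw [Nat.card_eq_fintype_card, Fintype.card_fun, Fintype.card_fin, hsub]
  have hc2 : Nat.card ({i : Fin m // i ≠ 0} → Fin Δ) = Δ ^ (m - 1) := by
    rw [Nat.card_eq_fintype_card, Fintype.card_fun, Fintype.card_fin, hsub]
  rw [hc1, hc2] at hcard
  exact hcard

end Graph

end BCKL

/-- Let `G` be a finite simple graph with maximum degree at most `Δ ≥ 1`. For any
vertex `v` and any `m ≥ 1`, the number of connected induced subgraphs of `G` of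
order `m` containing `v` is at most `(mΔ)^{m-1}/m!`. -/
theorem card_connected_induced_subgraphs_le
    {V : Type*} [Fintype V] (G : SimpleGraph V) (Δ : ℕ) (hΔ : 1 ≤ Δ)
    (hdeg : ∀ u, (G.neighborSet u).ncard ≤ Δ)
    (v : V) (m : ℕ) (hm : 1 ≤ m) :
    (({S : Finset V | v ∈ S ∧ S.card = m ∧ (G.induce (↑S : Set V)).Connected}.ncard : ℝ)) ≤
      ((m : ℝ) * Δ) ^ (m - 1) / m.factorial := by
  have : NeZero m := ⟨by omega⟩
  set N := {S : Finset V | v ∈ S ∧ S.card = m ∧ (G.induce (↑S : Set V)).Connected}.ncard with hN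
  have key : N * m.factorial ≤ (m * Δ) ^ (m - 1) := by
    have h1 := BCKL.step1 G m v hm
    have h2 := BCKL.step2 G m v hΔ hdeg
    have h3 : N * (m - 1).factorial * m ≤ m ^ (m - 1) * Δ ^ (m - 1) :=
      le_trans (Nat.mul_le_mul_right m h1) h2
    have h4 : N * m.factorial = N * (m - 1).factorial * m := by
      rw [mul_assoc, mul_comm ((m-1).factorial) m, Nat.mul_factorial_pred (by omega)]
    rw [h4, mul_pow]
    exact h3
  have hfac : (0 : ℝ) < (m.factorial : ℝ) := by
    exact_mod_cast m.factorial_pos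
  rw [le_div_iff₀ hfac]
  calc (N : ℝ) * (m.factorial : ℝ) = ((N * m.factorial : ℕ) : ℝ) := by push_cast; ring
    _ ≤ (((m * Δ) ^ (m - 1) : ℕ) : ℝ) := Nat.cast_le.2 key
    _ = ((m : ℝ) * Δ) ^ (m - 1) := by push_cast; ring
end

section
/- Let {E_v}_{v∈V(G)} be events with strong dependency graph G having chromatic number χ, and suppose Pr[complement of E_v] ≤ p for all v. Then for every subset S ⊆ V(G) inducing a connected subgraph of G, Pr[⋂_{v∈S} complement of E_v] ≤ p^{|S|/χ}. -/
open MeasureTheory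

lemma aux_indep_prod {Ω V : Type*} [MeasurableSpace Ω]
    (μ : Measure Ω) [IsProbabilityMeasure μ] (G : SimpleGraph V) (E : V → Set Ω)
    (hdep : ∀ A B : Set V, Disjoint A B → (∀ a ∈ A, ∀ b ∈ B, ¬ G.Adj a b) →
      ProbabilityTheory.Indep (MeasurableSpace.generateFrom (E '' A))
        (MeasurableSpace.generateFrom (E '' B)) μ)
    (T : Finset V) (hT : ∀ a ∈ T, ∀ b ∈ T, a ≠ b → ¬ G.Adj a b) :
    μ (⋂ v ∈ T, (E v)ᶜ) = ∏ v ∈ T, μ ((E v)ᶜ) := by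
  classical
  induction T using Finset.cons_induction with
  | empty => simp
  | cons a t ha ih =>
    have hdisj : Disjoint ({a} : Set V) (↑t : Set V) := by
      simp [Set.disjoint_singleton_left, ha]
    have hne : ∀ x ∈ ({a} : Set V), ∀ b ∈ (↑t : Set V), ¬ G.Adj x b := by
      intro x hx b hb
      rw [Set.mem_singleton_iff] at hx
      subst hx
      exact hT x (Finset.mem_cons_self x t) b (Finset.mem_cons_of_mem hb)
        (fun h => ha (h ▸ hb))
    have hind := hdep {a} ↑t hdisj hne
    have hs : MeasurableSet[MeasurableSpace.generateFrom (E '' {a})] ((E a)ᶜ) :=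
      (MeasurableSpace.measurableSet_generateFrom
        (Set.mem_image_of_mem E (Set.mem_singleton a))).compl
    have ht' : MeasurableSet[MeasurableSpace.generateFrom (E '' ↑t)]
        (⋂ v ∈ t, (E v)ᶜ) := by
      refine MeasurableSet.biInter t.countable_toSet (fun b hb => ?_)
      exact (MeasurableSpace.measurableSet_generateFrom
        (Set.mem_image_of_mem E hb)).compl
    have key : μ ((E a)ᶜ ∩ ⋂ v ∈ t, (E v)ᶜ) = μ ((E a)ᶜ) * μ (⋂ v ∈ t, (E v)ᶜ) :=
      ((ProbabilityTheory.indep_iff_forall_indepSet μ).mp hind _ _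
        hs ht').measure_inter_eq_mul
    rw [Finset.cons_eq_insert, Finset.set_biInter_insert, key,
      Finset.prod_insert ha,
      ih (fun x hx y hy => hT x (Finset.mem_cons_of_mem hx) y (Finset.mem_cons_of_mem hy))]

/-- Let `{E_v}` be events with strong dependency graph `G` having chromatic number
`χ`, and suppose `Pr[E_vᶜ] ≤ p` for all `v`. Then for every subset `S` of vertices
inducing a connected subgraph of `G`, `Pr[⋂_{v ∈ S} E_vᶜ] ≤ p^{|S|/χ}`. -/
theorem prob_inter_compl_le_of_strong_dependency_graph
    {Ω V : Type*} [Fintype V] [MeasurableSpace Ω]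
    (μ : Measure Ω) [IsProbabilityMeasure μ]
    (G : SimpleGraph V) (E : V → Set Ω) (hE : ∀ v, MeasurableSet (E v))
    (hdep : ∀ A B : Set V, Disjoint A B → (∀ a ∈ A, ∀ b ∈ B, ¬ G.Adj a b) →
      ProbabilityTheory.Indep (MeasurableSpace.generateFrom (E '' A))
        (MeasurableSpace.generateFrom (E '' B)) μ)
    (χ : ℕ) (hχ : 0 < χ) (hχG : G.chromaticNumber = (χ : ℕ∞))
    (p : ℝ) (hp0 : 0 ≤ p) (hp : ∀ v, (μ ((E v)ᶜ)).toReal ≤ p)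
    (S : Finset V) (hS : (G.induce (↑S : Set V)).Connected) :
    (μ (⋂ v ∈ S, (E v)ᶜ)).toReal ≤ p ^ ((S.card : ℝ) / χ) := by
  classical
  have hle1 : (μ (⋂ v ∈ S, (E v)ᶜ)).toReal ≤ 1 := by
    rw [← ENNReal.toReal_one]
    exact ENNReal.toReal_mono (by simp) prob_le_one
  rcases le_or_gt 1 p with h1p | hp1
  · exact hle1.trans (Real.one_le_rpow h1p (by positivity))
  obtain ⟨C⟩ : G.Colorable χ := SimpleGraph.chromaticNumber_le_iff_colorable.mp hχG.le
  have : Nonempty (Fin χ) := ⟨⟨0, hχ⟩⟩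
  obtain ⟨i₀, -, hi₀⟩ := Finset.exists_max_image (Finset.univ : Finset (Fin χ))
    (fun i => (S.filter (fun v => C v = i)).card) ⟨_, Finset.mem_univ (Classical.arbitrary _)⟩
  set T := S.filter (fun v => C v = i₀) with hTdef
  have hcard : S.card ≤ χ * T.card := by
    calc S.card = ∑ i : Fin χ, (S.filter (fun v => C v = i)).card :=
          Finset.card_eq_sum_card_fiberwise (fun v _ => Finset.mem_univ (C v))
      _ ≤ ∑ _i : Fin χ, T.card :=
          Finset.sum_le_sum (fun i _ => hi₀ i (Finset.mem_univ i))
      _ = χ * T.card := by simp [mul_comm]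
  have hTS : T ⊆ S := Finset.filter_subset _ _
  have hTind : ∀ a ∈ T, ∀ b ∈ T, a ≠ b → ¬ G.Adj a b := by
    intro a haT b hbT hne hadj
    have := C.valid hadj
    rw [(Finset.mem_filter.mp haT).2, (Finset.mem_filter.mp hbT).2] at this
    exact this rfl
  have hmono : μ (⋂ v ∈ S, (E v)ᶜ) ≤ μ (⋂ v ∈ T, (E v)ᶜ) :=
    measure_mono (Set.biInter_subset_biInter_left (fun v hv => hTS hv))
  have hprod := aux_indep_prod μ G E hdep T hTind
  have hTreal : (μ (⋂ v ∈ T, (E v)ᶜ)).toReal ≤ p ^ T.card := by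
    rw [hprod, ENNReal.toReal_prod]
    calc ∏ v ∈ T, (μ ((E v)ᶜ)).toReal ≤ ∏ _v ∈ T, p :=
          Finset.prod_le_prod (fun v _ => ENNReal.toReal_nonneg) (fun v _ => hp v)
      _ = p ^ T.card := Finset.prod_const p
  have step1 : (μ (⋂ v ∈ S, (E v)ᶜ)).toReal ≤ p ^ T.card :=
    le_trans (ENNReal.toReal_mono (measure_ne_top μ _) hmono) hTreal
  have hexp : (S.card : ℝ) / χ ≤ (T.card : ℝ) := by
    rw [div_le_iff₀ (by positivity)]
    calc (S.card : ℝ) ≤ ((χ * T.card : ℕ) : ℝ) := by exact_mod_cast hcard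
      _ = (T.card : ℝ) * χ := by push_cast; ring
  calc (μ (⋂ v ∈ S, (E v)ᶜ)).toReal ≤ p ^ T.card := step1
    _ = p ^ (T.card : ℝ) := (Real.rpow_natCast p T.card).symm
    _ ≤ p ^ ((S.card : ℝ) / χ) := by
        rcases eq_or_lt_of_le hp0 with rfl | hp0'
        · rcases Nat.eq_zero_or_pos S.card with hS0 | hS1
          · have hT0 : T.card = 0 := Nat.le_zero.mp (hS0 ▸ Finset.card_le_card hTS)
            simp [hS0, hT0]
          · have hTpos : 0 < T.card := by
              rcases Nat.eq_zero_or_pos T.card with h0 | h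
              · rw [h0, Nat.mul_zero] at hcard; omega
              · exact h
            rw [Real.zero_rpow (Nat.cast_ne_zero.mpr hTpos.ne'),
              Real.zero_rpow (div_ne_zero (Nat.cast_ne_zero.mpr hS1.ne')
                (Nat.cast_ne_zero.mpr hχ.ne'))]
        · exact Real.rpow_le_rpow_of_exponent_ge hp0' hp1.le hexp
end

section
/- Let Π_0 and Π_⋆ be operators on a finite-dimensional Hilbert space with Π_0 an orthogonal projector, Π_⋆ Π_0 = Π_0, and ‖Π_⋆(I − Π_0)‖ ≤ q for some 0 ≤ q ≤ 1, where ‖·‖ is the operator norm and ‖Π_⋆‖ ≤ 1. Then for every positive integer T, |tr(Π_⋆^T) − tr(Π_0)| ≤ q^T · rank(I − Π_0). -/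
open ContinuousLinearMap in
/-- Contraction fixing a vector: the adjoint fixes it too. -/
lemma adjoint_fix {H : Type*} [NormedAddCommGroup H] [InnerProductSpace ℂ H]
    [FiniteDimensional ℂ H] [CompleteSpace H]
    (A : H →L[ℂ] H) (hA : ‖A‖ ≤ 1) (y : H) (hy : A y = y) :
    ContinuousLinearMap.adjoint A y = y := by
  have h1 : inner ℂ (ContinuousLinearMap.adjoint A y) y = (‖y‖^2 : ℂ) := by
    rw [ContinuousLinearMap.adjoint_inner_left, hy, inner_self_eq_norm_sq_to_K]; norm_num
  have h2 : ‖ContinuousLinearMap.adjoint A y‖ ≤ ‖y‖ := by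
    calc ‖ContinuousLinearMap.adjoint A y‖ ≤ ‖ContinuousLinearMap.adjoint A‖ * ‖y‖ :=
      (ContinuousLinearMap.adjoint A).le_opNorm y
    _ ≤ 1 * ‖y‖ := by
        apply mul_le_mul_of_nonneg_right _ (norm_nonneg y)
        rw [LinearIsometryEquiv.norm_map]; exact hA
    _ = ‖y‖ := one_mul _
  have key : ‖ContinuousLinearMap.adjoint A y - y‖ = 0 := by
    have := @norm_sub_sq ℂ H _ _ _ (ContinuousLinearMap.adjoint A y) y
    have hre : (RCLike.re (inner ℂ (ContinuousLinearMap.adjoint A y) y : ℂ)) = ‖y‖^2 := by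
      rw [h1]; norm_cast
    nlinarith [norm_nonneg (ContinuousLinearMap.adjoint A y - y),
      pow_le_pow_left₀ (norm_nonneg (ContinuousLinearMap.adjoint A y)) h2 2]
  rwa [norm_eq_zero, sub_eq_zero] at key

/-- Let `Π_0` be an orthogonal projector and `Π_⋆` an operator on a
finite-dimensional Hilbert space with `Π_⋆ Π_0 = Π_0`, `‖Π_⋆‖ ≤ 1`, and
`‖Π_⋆(I - Π_0)‖ ≤ q` for some `0 ≤ q ≤ 1`. Then for every positive integer `T`,
`|tr(Π_⋆^T) - tr(Π_0)| ≤ q^T · rank(I - Π_0)`. -/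
theorem abs_trace_pow_sub_trace_proj_le
    {H : Type*} [NormedAddCommGroup H] [InnerProductSpace ℂ H]
    [FiniteDimensional ℂ H] [CompleteSpace H]
    (P0 Ps : H →L[ℂ] H)
    (hP0sa : IsSelfAdjoint P0) (hP0proj : P0 * P0 = P0)
    (hcomp : Ps * P0 = P0)
    (q : ℝ) (hq0 : 0 ≤ q) (hq1 : q ≤ 1)
    (hPs : ‖Ps‖ ≤ 1) (hbound : ‖Ps * (1 - P0)‖ ≤ q)
    (T : ℕ) (hT : 1 ≤ T) :
    ‖LinearMap.trace ℂ H ((Ps ^ T : H →L[ℂ] H) : H →ₗ[ℂ] H) -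
        LinearMap.trace ℂ H (P0 : H →ₗ[ℂ] H)‖ ≤
      q ^ T *
        (Module.finrank ℂ ↥(LinearMap.range ((1 - P0 : H →L[ℂ] H) : H →ₗ[ℂ] H)) : ℝ) := by
  -- Step 1: P0 * Ps = P0
  have hadj : ContinuousLinearMap.adjoint Ps * P0 = P0 := by
    ext x
    have : Ps (P0 x) = P0 x := by
      have := congrArg (fun (A : H →L[ℂ] H) => A x) hcomp
      simpa using this
    simpa using adjoint_fix Ps hPs (P0 x) this
  have hP0Ps : P0 * Ps = P0 := by
    have := congrArg ContinuousLinearMap.adjoint hadj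
    rw [show ContinuousLinearMap.adjoint Ps * P0 = ContinuousLinearMap.adjoint Ps ∘L P0 from rfl,
      ContinuousLinearMap.adjoint_comp, ContinuousLinearMap.adjoint_adjoint,
      hP0sa.adjoint_eq] at this
    exact this
  -- powers
  have hpowP0 : ∀ n : ℕ, Ps ^ n * P0 = P0 := by
    intro n; induction n with
    | zero => simp
    | succ n ih => rw [pow_succ, mul_assoc, hcomp, ih]
  have hP0pow : ∀ n : ℕ, P0 * Ps ^ n = P0 := by
    intro n; induction n with
    | zero => simp
    | succ n ih => rw [pow_succ, ← mul_assoc, ih, hP0Ps]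
  -- (Ps - P0)^n = Ps^n - P0 for n ≥ 1
  have hBpow : ∀ n : ℕ, 1 ≤ n → (Ps - P0) ^ n = Ps ^ n - P0 := by
    intro n hn
    induction n, hn using Nat.le_induction with
    | base => simp
    | succ n hn ih =>
      rw [pow_succ, ih, sub_mul, mul_sub, mul_sub, hpowP0 n, hP0Ps, hP0proj, ← pow_succ]
      abel
  set M : H →L[ℂ] H := Ps ^ T - P0 with hM
  -- norm bound on M
  have hBnorm : ‖Ps - P0‖ ≤ q := by
    have : Ps * (1 - P0) = Ps - P0 := by rw [mul_sub, mul_one, hcomp]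
    rwa [this] at hbound
  have hMnorm : ‖M‖ ≤ q ^ T := by
    rw [hM, ← hBpow T hT]
    calc ‖(Ps - P0) ^ T‖ ≤ ‖Ps - P0‖ ^ T := norm_pow_le' _ hT
    _ ≤ q ^ T := pow_le_pow_left₀ (norm_nonneg _) hBnorm T
  -- P0 * M = 0 hence range M ⊆ K
  have hP0M : ∀ x : H, P0 (M x) = 0 := by
    intro x
    have h1 : P0 * M = 0 := by rw [hM, mul_sub, hP0pow T, hP0proj, sub_self]
    have := congrArg (fun (A : H →L[ℂ] H) => A x) h1
    simpa using this
  set K := LinearMap.range ((1 - P0 : H →L[ℂ] H) : H →ₗ[ℂ] H) with hK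
  have hrange : ∀ x : H, (M : H →ₗ[ℂ] H) x ∈ K := by
    intro x
    refine ⟨M x, ?_⟩
    have : (1 - P0 : H →L[ℂ] H) (M x) = M x - P0 (M x) := by
      simp [ContinuousLinearMap.sub_apply]
    simp [this, hP0M x]
  set f : H →ₗ[ℂ] K := LinearMap.codRestrict K (M : H →ₗ[ℂ] H) hrange with hf
  have hMdecomp : (M : H →ₗ[ℂ] H) = K.subtype ∘ₗ f := by
    ext x; rfl
  have htr : LinearMap.trace ℂ H ((Ps ^ T : H →L[ℂ] H) : H →ₗ[ℂ] H) -
      LinearMap.trace ℂ H (P0 : H →ₗ[ℂ] H) = LinearMap.trace ℂ K (f ∘ₗ K.subtype) := by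
    rw [← LinearMap.trace_comp_comm', ← hMdecomp, ← map_sub]
    congr 1
  rw [htr]
  -- compute trace via orthonormal basis of K
  set L : K →ₗ[ℂ] K := f ∘ₗ K.subtype with hL
  set b := stdOrthonormalBasis ℂ K with hb
  have htr2 : LinearMap.trace ℂ K L = ∑ i, (inner ℂ (b i) (L (b i)) : ℂ) := by
    rw [LinearMap.trace_eq_matrix_trace ℂ b.toBasis L, Matrix.trace]
    congr 1
    ext i
    rw [Matrix.diag_apply, LinearMap.toMatrix_apply, OrthonormalBasis.coe_toBasis,
      OrthonormalBasis.coe_toBasis_repr_apply, OrthonormalBasis.repr_apply_apply]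
  rw [htr2]
  calc ‖∑ i, (inner ℂ (b i) (L (b i)) : ℂ)‖ ≤ ∑ i, ‖(inner ℂ (b i) (L (b i)) : ℂ)‖ :=
        norm_sum_le _ _
    _ ≤ ∑ _i : Fin (Module.finrank ℂ K), q ^ T := by
        apply Finset.sum_le_sum
        intro i _
        calc ‖(inner ℂ (b i) (L (b i)) : ℂ)‖ ≤ ‖b i‖ * ‖L (b i)‖ := norm_inner_le_norm _ _
        _ = ‖M ((b i : K) : H)‖ := by
            rw [b.orthonormal.1 i, one_mul]
            rfl
        _ ≤ ‖M‖ * ‖((b i : K) : H)‖ := M.le_opNorm _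
        _ ≤ q ^ T * 1 := by
            apply mul_le_mul hMnorm _ (norm_nonneg _) (pow_nonneg hq0 T)
            exact le_of_eq (b.orthonormal.1 i)
        _ = q ^ T := mul_one _
    _ = q ^ T * (Module.finrank ℂ K : ℝ) := by
        rw [Finset.sum_const, Finset.card_univ, Fintype.card_fin, nsmul_eq_mul, mul_comm]
end

section
/- Under the hypotheses of the Kotecký–Preiss criterion with a(γ) = ((Δ+1)/(2Δ+1))|γ| and d(γ) = δ|γ|: if for every polymer γ* (a connected induced subgraph of a graph G of maximum degree at most Δ) the weights satisfy |w_γ| ≤ (e^{1+δ}(2Δ+1))^{−|γ|}, then ∑_{γ incompatible with γ*} |w_γ| e^{((Δ+1)/(2Δ+1)+δ)|γ|} ≤ ((Δ+1)/(2Δ+1))|γ*|. -/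
open Finset

namespace KPaux

variable {V : Type*} {G : SimpleGraph V}

open scoped Classical

def RW (G : SimpleGraph V) (T : Finset V) (a b : V) : Prop :=
  ∃ p : G.Walk a b, ∀ x ∈ p.support, x ∈ T

lemma RW.mem_left {T : Finset V} {a b : V} (h : RW G T a b) : a ∈ T := by
  obtain ⟨p, hp⟩ := h; exact hp a p.start_mem_support

lemma RW.refl {T : Finset V} {a : V} (ha : a ∈ T) : RW G T a a :=
  ⟨SimpleGraph.Walk.nil, by simp [ha]⟩

lemma RW.symm {T : Finset V} {a b : V} (h : RW G T a b) : RW G T b a := by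
  obtain ⟨p, hp⟩ := h
  exact ⟨p.reverse, by simpa using hp⟩

lemma RW.trans {T : Finset V} {a b c : V} (h : RW G T a b) (h' : RW G T b c) :
    RW G T a c := by
  obtain ⟨p, hp⟩ := h; obtain ⟨q, hq⟩ := h'
  refine ⟨p.append q, fun x hx => ?_⟩
  rcases (SimpleGraph.Walk.mem_support_append_iff p q).1 hx with h1 | h1
  · exact hp x h1
  · exact hq x h1

lemma RW.of_mem_support {T : Finset V} {a b x : V} (p : G.Walk a b)
    (hp : ∀ y ∈ p.support, y ∈ T) (hx : x ∈ p.support) : RW G T a x :=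
  ⟨p.takeUntil x hx, fun y hy => hp y (p.support_takeUntil_subset hx hy)⟩

lemma exists_nbr_aux (S : Finset V) (u : V) :
    ∀ n (y : V), u ≠ y → ∀ q : G.Walk u y, q.length ≤ n →
      (∀ x ∈ q.support, x ∈ S) → ∃ v, G.Adj u v ∧ RW G (S.erase u) v y := by
  intro n
  induction n with
  | zero =>
    intro y huy q hq _
    cases q with
    | nil => exact absurd rfl huy
    | cons h' q₁ => simp at hq
  | succ n ih =>
    intro y huy q hq hsupp
    cases q with
    | nil => exact absurd rfl huy
    | @cons _ v _ h' q₁ =>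
      by_cases hu : u ∈ q₁.support
      · have hlen : (q₁.dropUntil u hu).length ≤ n := by
          have h1 := SimpleGraph.Walk.length_dropUntil_le q₁ hu
          have : q₁.length + 1 ≤ n + 1 := by simpa using hq
          omega
        exact ih y huy (q₁.dropUntil u hu) hlen
          (fun x hx => hsupp x (by
            simp only [SimpleGraph.Walk.support_cons, List.mem_cons]
            exact Or.inr (q₁.support_dropUntil_subset hu hx)))
      · refine ⟨v, h', q₁, fun x hx => ?_⟩
        refine Finset.mem_erase.2 ⟨?_, hsupp x (by simp [SimpleGraph.Walk.support_cons, hx])⟩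
        rintro rfl; exact hu hx

lemma comp_eq (T : Finset V) {v v' : V} (h : RW G T v v') :
    T.filter (RW G T v) = T.filter (RW G T v') := by
  ext y
  simp only [Finset.mem_filter, and_congr_right_iff]
  exact fun _ => ⟨fun hy => (h.symm).trans hy, fun hy => h.trans hy⟩

lemma RW.strengthen {T : Finset V} {v a : V} (h : RW G T v a) :
    RW G (T.filter (RW G T v)) v a := by
  obtain ⟨p, hp⟩ := h
  exact ⟨p, fun x hx => Finset.mem_filter.2 ⟨hp x hx, RW.of_mem_support p hp hx⟩⟩

lemma conn_iff (S : Finset V) :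
    (G.induce (↑S : Set V)).Connected ↔ S.Nonempty ∧ ∀ a ∈ S, ∀ b ∈ S, RW G S a b := by
  rw [SimpleGraph.connected_induce_iff,
    SimpleGraph.Subgraph.connected_iff_forall_exists_walk_subgraph]
  simp only [SimpleGraph.Subgraph.induce_verts]
  constructor
  · rintro ⟨hne, hw⟩
    refine ⟨by simpa using hne, fun a ha b hb => ?_⟩
    obtain ⟨p, hp⟩ := hw (by simpa using ha) (by simpa using hb)
    refine ⟨p, fun x hx => ?_⟩
    have := hp.1
    rw [p.verts_toSubgraph] at this
    simpa using this hx
  · rintro ⟨hne, hw⟩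
    refine ⟨by simpa using hne, fun {a b} ha hb => ?_⟩
    obtain ⟨p, hp⟩ := hw a (by simpa using ha) b (by simpa using hb)
    refine ⟨p, le_trans p.toSubgraph_le_induce_support
      (SimpleGraph.Subgraph.induce_mono_right ?_)⟩
    intro x hx
    simpa using hp x hx

lemma comp_conn (T : Finset V) (v : V) (hv : v ∈ T) :
    (G.induce (↑(T.filter (RW G T v)) : Set V)).Connected := by
  rw [conn_iff]
  refine ⟨⟨v, Finset.mem_filter.2 ⟨hv, RW.refl hv⟩⟩, fun a ha b hb => ?_⟩
  have hva : RW G (T.filter (RW G T v)) v a := ((Finset.mem_filter.1 ha).2).strengthen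
  have hvb : RW G (T.filter (RW G T v)) v b := ((Finset.mem_filter.1 hb).2).strengthen
  exact hva.symm.trans hvb

/-- Main inductive bound. -/
lemma main [Fintype V] (G : SimpleGraph V) (Δ : ℕ)
    (hdeg : ∀ v, (G.neighborSet v).ncard ≤ Δ)
    (x : ℝ) (hx0 : 0 ≤ x)
    (hxb : x * (1 + 1/(2*(Δ:ℝ)+1))^Δ ≤ 1/(2*(Δ:ℝ)+1)) :
    ∀ (n : ℕ) (A : Finset V) (u : V), A.card ≤ n →
      ∑ S ∈ univ.filter (fun S : Finset V =>
          u ∈ S ∧ S ⊆ A ∧ (G.induce (↑S : Set V)).Connected), x ^ S.card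
        ≤ 1/(2*(Δ:ℝ)+1) := by
  have hpos : (0:ℝ) < 1/(2*(Δ:ℝ)+1) := by positivity
  intro n
  induction n with
  | zero =>
    intro A u hA
    have hA0 : A = ∅ := Finset.card_eq_zero.1 (Nat.le_zero.1 hA)
    have : univ.filter (fun S : Finset V =>
        u ∈ S ∧ S ⊆ A ∧ (G.induce (↑S : Set V)).Connected) = ∅ := by
      ext S
      simp only [mem_filter, mem_univ, true_and, Finset.notMem_empty, iff_false, not_and]
      intro hu hSA
      exact absurd (hSA hu) (by simp [hA0])
    rw [this, sum_empty]
    exact le_of_lt hpos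
  | succ n ih =>
    intro A u hA
    by_cases huA : u ∈ A
    swap
    · have : univ.filter (fun S : Finset V =>
          u ∈ S ∧ S ⊆ A ∧ (G.induce (↑S : Set V)).Connected) = ∅ := by
        ext S
        simp only [mem_filter, mem_univ, true_and, Finset.notMem_empty, iff_false, not_and]
        intro hu hSA
        exact absurd (hSA hu) (fun h => huA h)
      rw [this, sum_empty]
      exact le_of_lt hpos
    -- main case
    have hA'card : (A.erase u).card ≤ n := by
      have := Finset.card_erase_of_mem huA
      have h1 : 1 ≤ A.card := Finset.card_pos.2 ⟨u, huA⟩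
      omega
    set A' : Finset V := A.erase u with hA'def
    set N : Finset V := A'.filter (fun v => G.Adj u v) with hNdef
    have hNΔ : N.card ≤ Δ := by
      have hsub : N ⊆ (G.neighborSet u).toFinset := by
        intro v hv
        simp only [Set.mem_toFinset, SimpleGraph.mem_neighborSet]
        exact (Finset.mem_filter.1 hv).2
      calc N.card ≤ (G.neighborSet u).toFinset.card := Finset.card_le_card hsub
        _ = (G.neighborSet u).ncard := (Set.ncard_eq_toFinset_card' _).symm
        _ ≤ Δ := hdeg u
    set comp : Finset V → V → Finset V :=
      fun S v => (S.erase u).filter (RW G (S.erase u) v) with hcompdef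
    set rep : Finset V → V := fun C => if h : (C ∩ N).Nonempty then h.choose else u with hrepdef
    set Φ : Finset V → V → Finset V :=
      fun S v => if rep (comp S v) = v ∧ v ∈ S then comp S v else ∅ with hΦdef
    set 𝒮 : Finset (Finset V) := univ.filter (fun S : Finset V =>
        u ∈ S ∧ S ⊆ A ∧ (G.induce (↑S : Set V)).Connected) with h𝒮def
    set t : V → Finset (Finset V) := fun v => insert ∅ (univ.filter (fun C : Finset V =>
        v ∈ C ∧ C ⊆ A' ∧ (G.induce (↑C : Set V)).Connected)) with htdef
    have rep_spec : ∀ C : Finset V, (h : (C ∩ N).Nonempty) → rep C ∈ C ∩ N := by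
      intro C h
      simp only [hrepdef, dif_pos h]
      exact h.choose_spec
    have comp_self : ∀ (S : Finset V) (v : V), v ∈ S.erase u → v ∈ comp S v := by
      intro S v hv
      exact Finset.mem_filter.2 ⟨hv, RW.refl hv⟩
    have comp_congr : ∀ (S : Finset V) {v v' : V}, v' ∈ comp S v → comp S v = comp S v' := by
      intro S v v' h
      exact comp_eq _ (Finset.mem_filter.1 h).2
    have comp_sub : ∀ (S : Finset V) (v : V), comp S v ⊆ S.erase u := by
      intro S v; exact Finset.filter_subset _ _
    have Φ_sub : ∀ (S : Finset V) (v : V), Φ S v ⊆ S.erase u := by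
      intro S v
      simp only [hΦdef]
      split
      · exact comp_sub S v
      · exact Finset.empty_subset _
    -- membership facts for S ∈ 𝒮
    have hSfacts : ∀ S ∈ 𝒮, u ∈ S ∧ S ⊆ A ∧ (G.induce (↑S : Set V)).Connected := by
      intro S hS
      simpa [h𝒮def] using (Finset.mem_filter.1 hS).2
    -- covering
    have cover : ∀ S ∈ 𝒮, ∀ y ∈ S.erase u, ∃ v₀ ∈ N, y ∈ Φ S v₀ := by
      intro S hS y hy
      obtain ⟨huS, hSA, hconn⟩ := hSfacts S hS
      obtain ⟨hyu, hyS⟩ := Finset.mem_erase.1 hy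
      obtain ⟨-, hrw⟩ := (conn_iff S).1 hconn
      obtain ⟨q, hq⟩ := hrw u huS y hyS
      obtain ⟨v, hadj, hrwv⟩ :=
        exists_nbr_aux S u q.length y (Ne.symm hyu) q le_rfl hq
      have hvS : v ∈ S.erase u := hrwv.mem_left
      have hvN : v ∈ N := by
        refine Finset.mem_filter.2 ⟨?_, hadj⟩
        exact Finset.mem_erase.2 ⟨(Finset.mem_erase.1 hvS).1, hSA (Finset.mem_of_mem_erase hvS)⟩
      have hyc : y ∈ comp S v := Finset.mem_filter.2 ⟨hy, hrwv⟩
      have hne : (comp S v ∩ N).Nonempty :=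
        ⟨v, Finset.mem_inter.2 ⟨comp_self S v hvS, hvN⟩⟩
      obtain ⟨hv₀c, hv₀N⟩ := Finset.mem_inter.1 (rep_spec _ hne)
      have hcc : comp S v = comp S (rep (comp S v)) := comp_congr S hv₀c
      refine ⟨rep (comp S v), hv₀N, ?_⟩
      have h1 : rep (comp S (rep (comp S v))) = rep (comp S v) := by rw [← hcc]
      have h2 : rep (comp S v) ∈ S := Finset.mem_of_mem_erase (comp_sub S v hv₀c)
      have : Φ S (rep (comp S v)) = comp S (rep (comp S v)) := by
        simp only [hΦdef, if_pos (And.intro h1 h2)]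
      rw [this, ← hcc]
      exact hyc
    -- each Φ S v lands in t v
    have mem_t : ∀ S ∈ 𝒮, ∀ v : V, Φ S v ∈ t v := by
      intro S hS v
      obtain ⟨huS, hSA, hconn⟩ := hSfacts S hS
      simp only [hΦdef]
      split
      · rename_i hc
        by_cases hv' : v ∈ S.erase u
        · refine Finset.mem_insert_of_mem (Finset.mem_filter.2 ⟨Finset.mem_univ _, ?_, ?_, ?_⟩)
          · exact comp_self S v hv'
          · exact (comp_sub S v).trans (Finset.erase_subset_erase u hSA)
          · exact comp_conn (S.erase u) v hv'
        · have : comp S v = ∅ := by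
            rw [Finset.eq_empty_iff_forall_notMem]
            intro y hy
            exact hv' ((Finset.mem_filter.1 hy).2).mem_left
          rw [this]
          exact Finset.mem_insert_self _ _
      · exact Finset.mem_insert_self _ _
    -- disjointness
    have disj : ∀ S ∈ 𝒮, ∀ v ∈ N, ∀ v' ∈ N, v ≠ v' → Disjoint (Φ S v) (Φ S v') := by
      intro S hS v _ v' _ hvv'
      rw [Finset.disjoint_left]
      intro y hy hy'
      simp only [hΦdef] at hy hy'
      by_cases hc : rep (comp S v) = v ∧ v ∈ S
      · by_cases hc' : rep (comp S v') = v' ∧ v' ∈ S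
        · rw [if_pos hc] at hy
          rw [if_pos hc'] at hy'
          have e1 : comp S v = comp S y := comp_congr S hy
          have e2 : comp S v' = comp S y := comp_congr S hy'
          have : v = v' := by
            rw [← hc.1, ← hc'.1, e1, e2]
          exact hvv' this
        · rw [if_neg hc'] at hy'
          exact absurd hy' (Finset.notMem_empty y)
      · rw [if_neg hc] at hy
        exact absurd hy (Finset.notMem_empty y)
    -- decomposition
    have decomp : ∀ S ∈ 𝒮, S.erase u = N.biUnion (Φ S) := by
      intro S hS
      ext y
      constructor
      · intro hy
        obtain ⟨v₀, hv₀, hyv₀⟩ := cover S hS y hy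
        exact Finset.mem_biUnion.2 ⟨v₀, hv₀, hyv₀⟩
      · intro hy
        obtain ⟨v, -, hyv⟩ := Finset.mem_biUnion.1 hy
        exact Φ_sub S v hyv
    have cardeq : ∀ S ∈ 𝒮, S.card = 1 + ∑ v ∈ N, (Φ S v).card := by
      intro S hS
      have huS := (hSfacts S hS).1
      have h1 : (S.erase u).card + 1 = S.card := Finset.card_erase_add_one huS
      have h2 : (S.erase u).card = ∑ v ∈ N, (Φ S v).card := by
        rw [decomp S hS]
        exact Finset.card_biUnion (disj S hS)
      omega
    -- injectivity
    have recover : ∀ S ∈ 𝒮, S = insert u (N.biUnion (Φ S)) := by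
      intro S hS
      rw [← decomp S hS, Finset.insert_erase (hSfacts S hS).1]
    -- the map Ψ into Finset.pi
    set Ψ : Finset V → (∀ v ∈ N, Finset V) := fun S => fun v _ => Φ S v with hΨdef
    have hinj : ∀ S ∈ 𝒮, ∀ S' ∈ 𝒮, Ψ S = Ψ S' → S = S' := by
      intro S hS S' hS' h
      rw [recover S hS, recover S' hS']
      congr 1
      apply Finset.biUnion_congr rfl
      intro v hv
      have := congrFun (congrFun h v) hv
      simpa [hΨdef] using this
    have hsub : 𝒮.image Ψ ⊆ N.pi (fun v => t v) := by
      intro p hp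
      obtain ⟨S, hS, rfl⟩ := Finset.mem_image.1 hp
      rw [Finset.mem_pi]
      intro v hv
      exact mem_t S hS v
    have hbase : (1:ℝ) ≤ 1 + 1/(2*(Δ:ℝ)+1) := by
      have : (0:ℝ) ≤ 1/(2*(Δ:ℝ)+1) := le_of_lt hpos
      linarith
    calc ∑ S ∈ 𝒮, x ^ S.card
        = ∑ S ∈ 𝒮, x * ∏ v ∈ N.attach, x ^ ((Ψ S) v.1 v.2).card := by
          refine Finset.sum_congr rfl fun S hS => ?_
          have : ∏ v ∈ N.attach, x ^ ((Ψ S) v.1 v.2).card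
              = ∏ v ∈ N, x ^ (Φ S v).card := by
            rw [← Finset.prod_attach N (fun v => x ^ (Φ S v).card)]
          rw [this, Finset.prod_pow_eq_pow_sum, cardeq S hS, pow_add, pow_one]
      _ = ∑ p ∈ 𝒮.image Ψ, x * ∏ v ∈ N.attach, x ^ ((p v.1 v.2).card) := by
          rw [Finset.sum_image hinj]
      _ ≤ ∑ p ∈ N.pi (fun v => t v), x * ∏ v ∈ N.attach, x ^ ((p v.1 v.2).card) := by
          refine Finset.sum_le_sum_of_subset_of_nonneg hsub ?_
          intro p _ _
          positivity
      _ = x * ∑ p ∈ N.pi (fun v => t v), ∏ v ∈ N.attach, x ^ ((p v.1 v.2).card) := by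
          rw [Finset.mul_sum]
      _ = x * ∏ v ∈ N, ∑ C ∈ t v, x ^ C.card := by
          rw [Finset.prod_sum]
      _ ≤ x * (1 + 1/(2*(Δ:ℝ)+1)) ^ N.card := by
          refine mul_le_mul_of_nonneg_left ?_ hx0
          calc ∏ v ∈ N, ∑ C ∈ t v, x ^ C.card
              ≤ ∏ v ∈ N, (1 + 1/(2*(Δ:ℝ)+1)) := by
                refine Finset.prod_le_prod (fun v _ => ?_) (fun v _ => ?_)
                · exact Finset.sum_nonneg fun C _ => by positivity
                · have hnm : (∅ : Finset V) ∉ univ.filter (fun C : Finset V =>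
                      v ∈ C ∧ C ⊆ A' ∧ (G.induce (↑C : Set V)).Connected) := by
                    simp
                  simp only [htdef]
                  rw [Finset.sum_insert hnm]
                  simp only [Finset.card_empty, pow_zero]
                  have := ih A' v hA'card
                  linarith
            _ = (1 + 1/(2*(Δ:ℝ)+1)) ^ N.card := Finset.prod_const _
      _ ≤ x * (1 + 1/(2*(Δ:ℝ)+1)) ^ Δ := by
          exact mul_le_mul_of_nonneg_left (pow_le_pow_right₀ hbase hNΔ) hx0
      _ ≤ 1/(2*(Δ:ℝ)+1) := hxb


end KPaux

open Finset in
open scoped Classical in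
/-- Kotecký–Preiss type bound with `a(γ) = ((Δ+1)/(2Δ+1))|γ|` and `d(γ) = δ|γ|`:
if every polymer (nonempty vertex subset inducing a connected subgraph of a
graph `G` of maximum degree at most `Δ`) has weight satisfying
`|w_γ| ≤ (e^{1+δ}(2Δ+1))^{-|γ|}`, then for every polymer `γ*`,
`∑_{γ ≁ γ*} |w_γ| e^{((Δ+1)/(2Δ+1)+δ)|γ|} ≤ ((Δ+1)/(2Δ+1))|γ*|`,
where `γ ≁ γ*` means `γ` intersects `γ*` or some edge of `G` joins them. -/
theorem kotecky_preiss_incompatibility_sum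
    {V : Type*} [Fintype V] (G : SimpleGraph V)
    (Δ : ℕ) (hΔ : 2 ≤ Δ) (hdeg : ∀ v, (G.neighborSet v).ncard ≤ Δ)
    (δ : ℝ) (hδ : 0 < δ) (w : Finset V → ℝ)
    (hw : ∀ γ : Finset V, γ.Nonempty → (G.induce (↑γ : Set V)).Connected →
      |w γ| ≤ ((Real.exp (1 + δ) * (2 * Δ + 1)) ^ γ.card)⁻¹)
    (γs : Finset V) (hγs : γs.Nonempty) (hγsconn : (G.induce (↑γs : Set V)).Connected) :
    ∑ γ ∈ Finset.univ.filter (fun γ : Finset V =>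
        γ.Nonempty ∧ (G.induce (↑γ : Set V)).Connected ∧
        (¬ Disjoint γ γs ∨ ∃ a ∈ γ, ∃ b ∈ γs, G.Adj a b)),
      |w γ| * Real.exp ((((Δ : ℝ) + 1) / (2 * Δ + 1) + δ) * γ.card) ≤
      ((Δ : ℝ) + 1) / (2 * Δ + 1) * γs.card := by
  have h2Δ : (0:ℝ) < 2*(Δ:ℝ)+1 := by positivity
  set a : ℝ := ((Δ:ℝ)+1)/(2*(Δ:ℝ)+1) with hadef
  set x : ℝ := Real.exp (a - 1) / (2*(Δ:ℝ)+1) with hxdef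
  have hx0 : 0 ≤ x := by rw [hxdef]; positivity
  have hs : (0:ℝ) < 1/(2*(Δ:ℝ)+1) := by positivity
  have hsum0 : a - 1 + (Δ:ℝ)*(1/(2*(Δ:ℝ)+1)) = 0 := by
    rw [hadef]; field_simp; ring
  have hxb : x * (1 + 1/(2*(Δ:ℝ)+1))^Δ ≤ 1/(2*(Δ:ℝ)+1) := by
    have h1 : (1:ℝ) + 1/(2*(Δ:ℝ)+1) ≤ Real.exp (1/(2*(Δ:ℝ)+1)) := by
      have := Real.add_one_le_exp (1/(2*(Δ:ℝ)+1))
      linarith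
    have h1' : (0:ℝ) ≤ 1 + 1/(2*(Δ:ℝ)+1) := by positivity
    have key : Real.exp (a - 1) * (1 + 1/(2*(Δ:ℝ)+1))^Δ ≤ 1 := by
      calc Real.exp (a - 1) * (1 + 1/(2*(Δ:ℝ)+1))^Δ
          ≤ Real.exp (a - 1) * (Real.exp (1/(2*(Δ:ℝ)+1)))^Δ := by
            exact mul_le_mul_of_nonneg_left (pow_le_pow_left₀ h1' h1 Δ) (Real.exp_pos _).le
        _ = Real.exp (a - 1 + (Δ:ℝ)*(1/(2*(Δ:ℝ)+1))) := by
            rw [← Real.exp_nat_mul, ← Real.exp_add]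
        _ = 1 := by rw [hsum0, Real.exp_zero]
    calc x * (1 + 1/(2*(Δ:ℝ)+1))^Δ
        = (Real.exp (a - 1) * (1 + 1/(2*(Δ:ℝ)+1))^Δ) / (2*(Δ:ℝ)+1) := by
          rw [hxdef]; ring
      _ ≤ 1/(2*(Δ:ℝ)+1) := by
          rw [div_le_div_iff₀ h2Δ h2Δ]
          nlinarith [key]
  -- per-polymer summand bound
  have hsummand : ∀ γ : Finset V, γ.Nonempty → (G.induce (↑γ : Set V)).Connected →
      |w γ| * Real.exp ((a + δ) * γ.card) ≤ x ^ γ.card := by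
    intro γ hne hconn
    have h1 := hw γ hne hconn
    have h2 : |w γ| * Real.exp ((a + δ) * γ.card)
        ≤ ((Real.exp (1+δ) * (2*(Δ:ℝ)+1))^γ.card)⁻¹ * Real.exp ((a+δ)*γ.card) :=
      mul_le_mul_of_nonneg_right h1 (Real.exp_pos _).le
    refine h2.trans_eq ?_
    have e1 : Real.exp (1+δ) ^ γ.card = Real.exp ((1+δ) * (γ.card:ℝ)) := by
      rw [mul_comm ((1:ℝ)+δ), Real.exp_nat_mul]
    have e2 : Real.exp (a-1) ^ γ.card = Real.exp ((a-1) * (γ.card:ℝ)) := by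
      rw [mul_comm (a-1), Real.exp_nat_mul]
    rw [hxdef, div_pow, e2, mul_pow, e1, mul_inv]
    rw [div_eq_mul_inv, ← Real.exp_neg]
    rw [mul_comm (Real.exp (-((1+δ)*(γ.card:ℝ)))) (((2*(Δ:ℝ)+1)^γ.card)⁻¹), mul_assoc,
      ← Real.exp_add]
    rw [mul_comm (((2*(Δ:ℝ)+1)^γ.card)⁻¹) _]
    congr 2
    ring
  -- the closed neighborhood of γs
  set NB : Finset V := γs ∪ univ.filter (fun v => ∃ b ∈ γs, G.Adj v b) with hNBdef
  have hNBcard : (NB.card : ℝ) ≤ ((Δ:ℝ)+1) * γs.card := by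
    have hsub : NB ⊆ γs.biUnion (fun b => insert b (G.neighborSet b).toFinset) := by
      intro v hv
      rcases Finset.mem_union.1 hv with h | h
      · exact Finset.mem_biUnion.2 ⟨v, h, Finset.mem_insert_self _ _⟩
      · obtain ⟨b, hb, hadj⟩ := (Finset.mem_filter.1 h).2
        exact Finset.mem_biUnion.2
          ⟨b, hb, Finset.mem_insert_of_mem (Set.mem_toFinset.2 hadj.symm)⟩
    have h1 : NB.card ≤ ∑ b ∈ γs, (insert b (G.neighborSet b).toFinset).card :=
      (Finset.card_le_card hsub).trans Finset.card_biUnion_le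
    have h2 : ∑ b ∈ γs, (insert b (G.neighborSet b).toFinset).card ≤ γs.card * (Δ+1) := by
      have : ∀ b ∈ γs, (insert b (G.neighborSet b).toFinset).card ≤ Δ + 1 := by
        intro b _
        have hins := Finset.card_insert_le b (G.neighborSet b).toFinset
        have hd := hdeg b
        rw [Set.ncard_eq_toFinset_card'] at hd
        omega
      calc ∑ b ∈ γs, (insert b (G.neighborSet b).toFinset).card
          ≤ γs.card • (Δ+1) := Finset.sum_le_card_nsmul _ _ _ this
        _ = γs.card * (Δ+1) := by rw [smul_eq_mul]
    have h3 : NB.card ≤ γs.card * (Δ+1) := h1.trans h2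
    calc (NB.card : ℝ) ≤ (γs.card * (Δ+1) : ℕ) := by exact_mod_cast h3
      _ = ((Δ:ℝ)+1) * γs.card := by push_cast; ring
  set T : Finset (Finset V) := Finset.univ.filter (fun γ : Finset V =>
      γ.Nonempty ∧ (G.induce (↑γ : Set V)).Connected ∧
      (¬ Disjoint γ γs ∨ ∃ a ∈ γ, ∃ b ∈ γs, G.Adj a b)) with hTdef
  calc ∑ γ ∈ T, |w γ| * Real.exp ((a + δ) * γ.card)
      ≤ ∑ γ ∈ T, x ^ γ.card := by
        refine Finset.sum_le_sum fun γ hγ => ?_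
        obtain ⟨hne, hconn, -⟩ := (Finset.mem_filter.1 hγ).2
        exact hsummand γ hne hconn
    _ ≤ ∑ γ ∈ T, ∑ u ∈ NB, (if u ∈ γ then x ^ γ.card else 0) := by
        refine Finset.sum_le_sum fun γ hγ => ?_
        obtain ⟨hne, hconn, hinc⟩ := (Finset.mem_filter.1 hγ).2
        obtain ⟨u₀, hu₀NB, hu₀γ⟩ : ∃ u₀, u₀ ∈ NB ∧ u₀ ∈ γ := by
          rcases hinc with h | ⟨a', ha', b, hb, hadj⟩
          · obtain ⟨z, hz1, hz2⟩ := Finset.not_disjoint_iff.1 h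
            exact ⟨z, Finset.mem_union.2 (Or.inl hz2), hz1⟩
          · exact ⟨a', Finset.mem_union.2 (Or.inr (Finset.mem_filter.2
              ⟨Finset.mem_univ _, ⟨b, hb, hadj⟩⟩)), ha'⟩
        have hle : (if u₀ ∈ γ then x ^ γ.card else 0)
            ≤ ∑ u ∈ NB, (if u ∈ γ then x ^ γ.card else 0) := by
          refine Finset.single_le_sum (f := fun u => if u ∈ γ then x ^ γ.card else 0)
            (fun u _ => ?_) hu₀NB
          split
          · positivity
          · exact le_refl 0
        rw [if_pos hu₀γ] at hle
        exact hle
    _ = ∑ u ∈ NB, ∑ γ ∈ T, (if u ∈ γ then x ^ γ.card else 0) := Finset.sum_comm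
    _ ≤ ∑ _u ∈ NB, 1/(2*(Δ:ℝ)+1) := by
        refine Finset.sum_le_sum fun u _ => ?_
        rw [← Finset.sum_filter]
        have hsub2 : T.filter (fun γ => u ∈ γ) ⊆ univ.filter (fun S : Finset V =>
            u ∈ S ∧ S ⊆ univ ∧ (G.induce (↑S : Set V)).Connected) := by
          intro γ hγ
          obtain ⟨hγT, huγ⟩ := Finset.mem_filter.1 hγ
          obtain ⟨-, hconn, -⟩ := (Finset.mem_filter.1 hγT).2
          exact Finset.mem_filter.2 ⟨Finset.mem_univ _, huγ, Finset.subset_univ _, hconn⟩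
        calc ∑ γ ∈ T.filter (fun γ => u ∈ γ), x ^ γ.card
            ≤ ∑ S ∈ univ.filter (fun S : Finset V =>
                u ∈ S ∧ S ⊆ univ ∧ (G.induce (↑S : Set V)).Connected), x ^ S.card :=
              Finset.sum_le_sum_of_subset_of_nonneg hsub2 (fun _ _ _ => by positivity)
          _ ≤ 1/(2*(Δ:ℝ)+1) := KPaux.main G Δ hdeg x hx0 hxb (univ.card) univ u (le_refl _)
    _ = (NB.card : ℝ) * (1/(2*(Δ:ℝ)+1)) := by
        rw [Finset.sum_const, nsmul_eq_mul]
    _ ≤ (((Δ:ℝ)+1) * γs.card) * (1/(2*(Δ:ℝ)+1)) := mul_le_mul_of_nonneg_right hNBcard hs.le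
    _ = a * γs.card := by rw [hadef]; ring
end
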